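/- In a p-equipped poset 𝒫 with 0 a minimal strong point, suppose that in the Hasse diagram there is exactly one arrow i → j out of i, and that for all u ≥ j one has i ≤^ℓ u if and only if j ≤^ℓ u. If moreover i ≤^ℓ j with the above compatibility (so ℓ ∈ {1, p}), then for every u ≥ j: dim_F(e_iΛ^{(c)}e_u) = dim_F(e_jΛ^{(c)}e_u), and consequently rad(e_iΛ^{(c)}) ≅ e_jΛ^{(c)} as right Λ^{(c)}-modules. -/

import Mathlib

section LambdaC

variable {P : Type*} [Fintype P] [DecidableEq P] [PartialOrder P]
  [DecidableRel ((· ≤ ·) : P → P → Prop)]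
variable {F G : Type*} [Field F] [Field G] [Algebra F G]

/-- The subspace `ℛ^{(c)}_{x,y} = F⟨1, ξ, …, ξ^{ℓ-1}⟩ ⊆ G` attached to a relation
`x ≤^ℓ y` of a `p`-equipped poset. -/
def Rc (e : P → P → ℕ) (ξ : G) (x y : P) : Submodule F G :=
  Submodule.span F {g : G | ∃ k : ℕ, k < e x y ∧ g = ξ ^ k}

/-- The underlying set of the algebra `Λ^{(c)}`. -/
def lambdaCSet (e : P → P → ℕ) (ξ : G) : Set (Matrix P P G) :=
  {M | ∀ a c : P, (a ≤ c → M a c ∈ (Rc (F := F) e ξ a c)) ∧ (¬ a ≤ c → M a c = 0)}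

/-- The set underlying the projective right module `e_jΛ^{(c)}`: matrices supported
on row `j`, with entries in `ℛ^{(c)}_{j,t}` for `j ≤ t`. -/
def rowSet (e : P → P → ℕ) (ξ : G) (j : P) : Set (Matrix P P G) :=
  {M | ∀ a c : P,
    ((a = j ∧ j ≤ c) → M a c ∈ (Rc (F := F) e ξ j c)) ∧ (¬ (a = j ∧ j ≤ c) → M a c = 0)}

/-- The set underlying `rad(e_iΛ^{(c)}) = ⊕_{i < t} e_{i,t} ℛ^{(c)}_{i,t}`. -/
def radRowSet (e : P → P → ℕ) (ξ : G) (i : P) : Set (Matrix P P G) :=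
  {M | ∀ a c : P,
    ((a = i ∧ i < c) → M a c ∈ (Rc (F := F) e ξ i c)) ∧ (¬ (a = i ∧ i < c) → M a c = 0)}

/-- In a `p`-equipped poset `𝒫`, suppose `i → j` is the only arrow out of `i` in the
Hasse diagram and for all `u ≥ j` one has `i ≤^ℓ u ↔ j ≤^ℓ u` (so `i ≤^ℓ j` with
`ℓ ∈ {1, p}`).  Then for every `u ≥ j`, `dim_F (e_iΛ^{(c)}e_u) = dim_F (e_jΛ^{(c)}e_u)`
and consequently `rad(e_iΛ^{(c)}) ≅ e_jΛ^{(c)}` as right `Λ^{(c)}`-modules. -/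
theorem rad_proj_iso
    (p : ℕ) (hp : p.Prime)
    (e : P → P → ℕ)
    (hrange : ∀ x y : P, x ≤ y → 1 ≤ e x y ∧ e x y ≤ p)
    (haxiom : ∀ x y z : P, x ≤ y → y ≤ z → min (e x y + e y z - 1) p ≤ e x z)
    (q : F) (ξ : G) (hξ : ξ ^ p = algebraMap F G q)
    (b : Module.Basis (Fin p) F G) (hb : ∀ k : Fin p, b k = ξ ^ (k : ℕ))
    (i j : P)
    (harrow : i < j ∧ ∀ k : P, i < k → j ≤ k)
    (hcompat : ∀ u : P, j ≤ u → e i u = e j u)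
    (hℓ : e i j = 1 ∨ e i j = p) :
    (∀ u : P, j ≤ u →
      Module.finrank F ↥(Rc (F := F) e ξ i u) = Module.finrank F ↥(Rc (F := F) e ξ j u)) ∧
    ∃ φ : Matrix P P G →ₗ[F] Matrix P P G,
      Set.BijOn φ (radRowSet (F := F) e ξ i) (rowSet (F := F) e ξ j) ∧
      ∀ v ∈ radRowSet (F := F) e ξ i, ∀ m ∈ lambdaCSet (F := F) e ξ,
        φ (v * m) = φ v * m := by
  have hij : i < j := harrow.1
  have hiff : ∀ c : P, i < c ↔ j ≤ c :=
    fun c => ⟨harrow.2 c, fun h => lt_of_lt_of_le hij h⟩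
  have key : ∀ u : P, j ≤ u → Rc (F := F) e ξ i u = Rc (F := F) e ξ j u := by
    intro u hu
    unfold Rc
    rw [hcompat u hu]
  constructor
  · intro u hu; rw [key u hu]
  · refine ⟨{ toFun := fun M => Matrix.of fun a c => if a = j then M i c else 0
              map_add' := ?_
              map_smul' := ?_ }, ?_, ?_⟩
    · intro M N; ext a c
      by_cases h : a = j <;> simp [h, Matrix.add_apply]
    · intro r M; ext a c
      by_cases h : a = j <;> simp [h, Matrix.smul_apply]
    · refine ⟨?_, ?_, ?_⟩
      · -- MapsTo
        intro M hM
        intro a c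
        constructor
        · rintro ⟨rfl, hc⟩
          simp only [LinearMap.coe_mk, AddHom.coe_mk, Matrix.of_apply, eq_self_iff_true,
            if_true]
          rw [← key c hc]
          exact (hM i c).1 ⟨rfl, (hiff c).2 hc⟩
        · intro h
          simp only [LinearMap.coe_mk, AddHom.coe_mk, Matrix.of_apply]
          by_cases ha : a = j
          · rw [if_pos ha]
            apply (hM i c).2
            rintro ⟨-, hic⟩
            exact h ⟨ha, (hiff c).1 hic⟩
          · rw [if_neg ha]
      · -- InjOn
        intro M hM N hN hMN
        ext a c
        by_cases ha : a = i
        · subst ha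
          by_cases hc : a < c
          · have := congrFun (congrFun hMN j) c
            simpa using this
          · rw [(hM a c).2 (fun h => hc h.2), (hN a c).2 (fun h => hc h.2)]
        · rw [(hM a c).2 (fun h => ha h.1), (hN a c).2 (fun h => ha h.1)]
      · -- SurjOn
        intro N hN
        refine ⟨Matrix.of fun a c => if a = i then N j c else 0, ?_, ?_⟩
        · intro a c
          constructor
          · rintro ⟨rfl, hc⟩
            simp only [Matrix.of_apply, if_pos rfl]
            rw [key c ((hiff c).1 hc)]
            exact (hN j c).1 ⟨rfl, (hiff c).1 hc⟩
          · intro h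
            simp only [Matrix.of_apply]
            by_cases ha : a = i
            · rw [if_pos ha]
              apply (hN j c).2
              rintro ⟨-, hjc⟩
              exact h ⟨ha, (hiff c).2 hjc⟩
            · rw [if_neg ha]
        · ext a c
          simp only [LinearMap.coe_mk, AddHom.coe_mk, Matrix.of_apply]
          by_cases ha : a = j
          · subst ha
            simp only [eq_self_iff_true, if_true]
          · rw [if_neg ha, ((hN a c).2 (fun h => ha h.1)).symm]
    · -- module map compat
      intro v hv m hm
      ext a c
      simp only [LinearMap.coe_mk, AddHom.coe_mk, Matrix.of_apply, Matrix.mul_apply]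
      by_cases ha : a = j
      · simp [ha]
      · simp [ha]


end LambdaC
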